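/- Amplitude formula for the public-key state under the Hadamard-transform attack: for all bit strings i, k, y of length n, the y-component of H^{⊗n} applied to e_i + e_{i+k} equals (1/√(2^n)) · (−1)^a · (1 + (−1)^c), where a is the number of indices l with y l = 1 and i l = 1, and c is the number of indices l with y l = 1 and k l = 1. -/

import Mathlib

open Matrix Finset

/-- Tensor product of a family of one-qubit matrices, as a matrix indexed by bit strings. -/
def tens {n : ℕ} (A : Fin n → Matrix (ZMod 2) (ZMod 2) ℂ) :
    Matrix (Fin n → ZMod 2) (Fin n → ZMod 2) ℂ :=
  Matrix.of fun x y => ∏ l, A l (x l) (y l)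

/-- The Hadamard matrix. -/
noncomputable def Hmat : Matrix (ZMod 2) (ZMod 2) ℂ :=
  (1 / Real.sqrt 2 : ℝ) • !![1, 1; 1, -1]

lemma Hmat_apply (a b : ZMod 2) :
    Hmat a b = (1 / Real.sqrt 2 : ℝ) * (if a = 1 ∧ b = 1 then (-1 : ℂ) else 1) := by
  change (1 / Real.sqrt 2 : ℝ) • ((!![1, 1; 1, -1] : Matrix (Fin 2) (Fin 2) ℂ) a b) = _
  rcases (by decide : ∀ a : ZMod 2, a = 0 ∨ a = 1) a with rfl | rfl <;>
    rcases (by decide : ∀ a : ZMod 2, a = 0 ∨ a = 1) b with rfl | rfl <;>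
    simp [Complex.real_smul,
      show (!![1, 1; 1, -1] : Matrix (Fin 2) (Fin 2) ℂ) (1 : ZMod 2) (1 : ZMod 2) = -1 from rfl] <;> rfl

lemma prod_if_neg_one {n : ℕ} (P : Fin n → Prop) [DecidablePred P] :
    ∏ l, (if P l then (-1 : ℂ) else 1) = (-1) ^ (Finset.univ.filter P).card := by
  rw [Finset.prod_ite, Finset.prod_const, Finset.prod_const, one_pow, mul_one]

/-- Amplitude formula for `H^{⊗n} (e_i + e_{i⊕k})` at outcome `y`. -/
theorem hadamard_attack_amplitude {n : ℕ} (i k y : Fin n → ZMod 2) :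
    ((tens fun _ : Fin n => Hmat) *ᵥ
        (Pi.single i (1 : ℂ) + Pi.single (i + k) (1 : ℂ))) y
      = (1 / Real.sqrt (2 ^ n) : ℝ)
          * (-1 : ℂ) ^ (Finset.univ.filter (fun l : Fin n => y l = 1 ∧ i l = 1)).card
          * (1 + (-1 : ℂ) ^ (Finset.univ.filter (fun l : Fin n => y l = 1 ∧ k l = 1)).card) := by
  have key : ∀ j : Fin n → ZMod 2, tens (fun _ : Fin n => Hmat) y j
      = (1 / Real.sqrt (2 ^ n) : ℝ)
        * (-1 : ℂ) ^ (Finset.univ.filter (fun l : Fin n => y l = 1 ∧ j l = 1)).card := by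
    intro j
    simp only [tens, Matrix.of_apply, Hmat_apply]
    rw [Finset.prod_mul_distrib, Finset.prod_const, prod_if_neg_one, Finset.card_univ, Fintype.card_fin]
    congr 1
    rw [← Complex.ofReal_pow]
    congr 1
    rw [div_pow, one_pow,
      show (2:ℝ) ^ n = (Real.sqrt 2 ^ n) ^ 2 by
        rw [← pow_mul, mul_comm, pow_mul, Real.sq_sqrt (by norm_num : (0:ℝ) ≤ 2)],
      Real.sqrt_sq (by positivity)]
  have parity : (-1 : ℂ) ^ (Finset.univ.filter (fun l : Fin n => y l = 1 ∧ i l + k l = 1)).card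
      = (-1 : ℂ) ^ (Finset.univ.filter (fun l : Fin n => y l = 1 ∧ i l = 1)).card
        * (-1 : ℂ) ^ (Finset.univ.filter (fun l : Fin n => y l = 1 ∧ k l = 1)).card := by
    rw [← prod_if_neg_one, ← prod_if_neg_one, ← prod_if_neg_one, ← Finset.prod_mul_distrib]
    refine Finset.prod_congr rfl fun l _ => ?_
    have := y l; have := i l; have := k l
    rcases (by decide : ∀ a : ZMod 2, a = 0 ∨ a = 1) (y l) with hy | hy <;>
      rcases (by decide : ∀ a : ZMod 2, a = 0 ∨ a = 1) (i l) with hi | hi <;>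
      rcases (by decide : ∀ a : ZMod 2, a = 0 ∨ a = 1) (k l) with hk | hk <;>
      simp [Pi.add_apply, hy, hi, hk]
  rw [mulVec_add, mulVec_single_one, mulVec_single_one]
  simp only [Pi.add_apply, Matrix.col_apply, mul_one, key, parity]
  ring
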